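/- Let S be an atomic monoid and b ∈ S. Then ω(S,b) equals the smallest N ∈ ℕ₀ ∪ {∞} such that: for all n ∈ ℕ and atoms a₁,…,aₙ ∈ 𝒜(S), if b divides a₁⋯aₙ, then there exists a subset Ω ⊆ [1,n] with |Ω| ≤ N such that b divides ∏_{ν∈Ω} a_ν. That is, in the definition of ω(S,b) one may restrict the products a₁⋯aₙ to products of atoms without changing the value. -/

import Mathlib

open scoped BigOperators

/-- In the definition of `ω(S,b)` one may restrict to products of atoms
(irreducible elements) without changing the value. -/
private lemma multiset_map_sum' {ι α β : Type*} (f : α → β) (s : Finset ι) (m : ι → Multiset α) :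
    (∑ i ∈ s, m i).map f = ∑ i ∈ s, (m i).map f := by
  induction s using Finset.cons_induction with
  | empty => simp
  | cons a s ha ih => simp [Finset.sum_cons, ih]

private lemma multiset_filter_sum' {ι α : Type*} (p : α → Prop) [DecidablePred p]
    (s : Finset ι) (m : ι → Multiset α) :
    (∑ i ∈ s, m i).filter p = ∑ i ∈ s, (m i).filter p := by
  induction s using Finset.cons_induction with
  | empty => simp
  | cons a s ha ih => simp [Finset.sum_cons, Multiset.filter_add, ih]

theorem omega_eq_omega_atoms {S : Type*} [CancelCommMonoid S]
    (hatomic : ∀ a : S, ¬IsUnit a →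
      ∃ m : Multiset S, (∀ x ∈ m, Irreducible x) ∧ m.prod = a)
    (b : S) :
    sInf {N : ℕ∞ | ∀ (n : ℕ) (a : Fin n → S), b ∣ ∏ i, a i →
        ∃ Ω : Finset (Fin n), (Ω.card : ℕ∞) ≤ N ∧ b ∣ ∏ i ∈ Ω, a i}
      =
    sInf {N : ℕ∞ | ∀ (n : ℕ) (a : Fin n → S), (∀ i, Irreducible (a i)) →
        b ∣ ∏ i, a i →
        ∃ Ω : Finset (Fin n), (Ω.card : ℕ∞) ≤ N ∧ b ∣ ∏ i ∈ Ω, a i} := by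
  classical
  apply le_antisymm
  · -- hard direction: any N satisfying the atoms property satisfies the general property
    refine le_sInf fun N hN => sInf_le ?_
    intro n a hdvd
    -- factor each `a i` into atoms (up to a unit)
    have hm : ∀ i : Fin n, ∃ M : Multiset S,
        (∀ x ∈ M, Irreducible x) ∧ ∃ u : S, IsUnit u ∧ a i = u * M.prod := by
      intro i
      by_cases h : IsUnit (a i)
      · exact ⟨0, by simp, a i, h, by simp⟩
      · obtain ⟨M, h1, h2⟩ := hatomic (a i) h
        exact ⟨M, h1, 1, isUnit_one, by simp [h2]⟩
    choose m hirr u hu ha using hm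
    have hmd : ∀ i, (m i).prod ∣ a i := fun i => (ha i) ▸ dvd_mul_left _ _
    -- b divides the product of all the atoms
    have hbM : b ∣ ∏ i, (m i).prod := by
      have h1 : ∏ i, a i = (∏ i, u i) * ∏ i, (m i).prod := by
        rw [← Finset.prod_mul_distrib]
        exact Finset.prod_congr rfl fun i _ => ha i
      have h2 : IsUnit (∏ i, u i) :=
        Finset.univ.prod_induction _ IsUnit (fun _ _ => IsUnit.mul) isUnit_one
          (fun i _ => hu i)
      exact (h2.dvd_mul_left).mp (h1 ▸ hdvd)
    -- tag each atom with its source index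
    set T : Multiset (Fin n × S) := ∑ i, (m i).map (fun x => (i, x)) with hT
    set LT := T.toList with hLTdef
    have hLT : (LT : Multiset (Fin n × S)) = T := Multiset.coe_toList T
    have hmemT : ∀ j : Fin LT.length, LT.get j ∈ T := by
      intro j
      rw [← hLT]
      exact LT.get_mem j
    -- the atom sequence
    set a' : Fin LT.length → S := fun j => (LT.get j).2 with ha'
    have hirr' : ∀ j, Irreducible (a' j) := by
      intro j
      obtain ⟨i, -, hx⟩ := Multiset.mem_sum.mp (hmemT j)
      obtain ⟨y, hy, hxy⟩ := Multiset.mem_map.mp hx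
      have hthis : a' j = y := congrArg Prod.snd hxy.symm
      rw [hthis]
      exact hirr i y hy
    have hTmap : T.map Prod.snd = ∑ i, m i := by
      rw [hT, multiset_map_sum']
      refine Finset.sum_congr rfl fun i _ => ?_
      simp [Multiset.map_map, Function.comp]
    have hprod' : ∏ j, a' j = ∏ i, (m i).prod := by
      have h1 : List.ofFn a' = LT.map Prod.snd := by
        rw [ha']
        rw [show (fun j => (LT.get j).2) = Prod.snd ∘ LT.get from rfl]
        rw [← List.map_ofFn, List.ofFn_get]
      calc ∏ j, a' j = (List.ofFn a').prod := (List.prod_ofFn).symm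
        _ = ((LT.map Prod.snd : List S) : Multiset S).prod := by rw [h1, Multiset.prod_coe]
        _ = (T.map Prod.snd).prod := by rw [← Multiset.map_coe, hLT]
        _ = ∏ i, (m i).prod := by rw [hTmap, Multiset.prod_sum]
    obtain ⟨Ω, hΩcard, hΩdvd⟩ := hN LT.length a' hirr' (hprod' ▸ hbM)
    -- map back to source indices
    set φ : Fin LT.length → Fin n := fun j => (LT.get j).1 with hφ
    refine ⟨Ω.image φ, ?_, ?_⟩
    · calc ((Ω.image φ).card : ℕ∞) ≤ (Ω.card : ℕ∞) :=
            Nat.cast_le.mpr (Finset.card_image_le)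
        _ ≤ N := hΩcard
    · -- b ∣ ∏ j ∈ Ω, a' j ∣ ∏ i ∈ Ω.image φ, a i
      refine hΩdvd.trans ?_
      rw [← Finset.prod_fiberwise_of_maps_to (fun j hj => Finset.mem_image_of_mem φ hj) a']
      refine Finset.prod_dvd_prod_of_dvd _ _ fun i _ => ?_
      refine dvd_trans ?_ (hmd i)
      -- the atoms selected from source i form a submultiset of m i
      set Ωi := Ω.filter (fun j => φ j = i) with hΩi
      have hsub : Ωi.val.map LT.get ≤ T.filter (fun x => x.1 = i) := by
        refine Multiset.le_filter.mpr ⟨?_, ?_⟩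
        · calc Ωi.val.map LT.get ≤ Finset.univ.val.map LT.get :=
                Multiset.map_le_map (Finset.val_le_iff.mpr (Finset.subset_univ Ωi))
            _ = ((List.ofFn LT.get : List (Fin n × S)) : Multiset (Fin n × S)) :=
                Fin.univ_val_map LT.get
            _ = T := by rw [List.ofFn_get, hLT]
        · intro x hx
          obtain ⟨j, hj, hjx⟩ := Multiset.mem_map.mp hx
          have := (Finset.mem_filter.mp (by exact hj : j ∈ Ωi)).2
          rw [← hjx]
          exact this
      have hterm : ∀ k : Fin n, Multiset.filter (fun x => x.1 = i) ((m k).map (fun x => (k, x)))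
          = if k = i then (m k).map (fun x => (k, x)) else 0 := by
        intro k
        rw [Multiset.filter_map]
        by_cases hk : k = i
        · subst hk
          rw [if_pos rfl]
          congr 1
          exact Multiset.filter_eq_self.mpr (fun x _ => rfl)
        · rw [if_neg hk]
          have h0 : Multiset.filter ((fun x : Fin n × S => x.1 = i) ∘ fun x => (k, x)) (m k) = 0 :=
            Multiset.filter_eq_nil.mpr (fun x _ => by simp [Function.comp, hk])
        
          rw [h0]
          simp
      have hfil : T.filter (fun x => x.1 = i) = (m i).map (fun x => (i, x)) := by
        rw [hT, multiset_filter_sum', Finset.sum_congr rfl fun k _ => hterm k]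
        simp
      have hsub2 : (Ωi.val.map LT.get).map Prod.snd ≤ m i := by
        have h0 := Multiset.map_le_map (f := Prod.snd) hsub
        rw [hfil] at h0
        have h1 : Multiset.map Prod.snd ((m i).map (fun x => (i, x))) = m i := by
          simp [Multiset.map_map]
        rwa [h1] at h0
      calc ∏ j ∈ Ωi, a' j = ((Ωi.val.map LT.get).map Prod.snd).prod := by
            rw [Finset.prod, Multiset.map_map]; rfl
        _ ∣ (m i).prod := Multiset.prod_dvd_prod_of_le hsub2
  · -- easy direction: the general set is contained in the atoms set
    exact sInf_le_sInf fun N hN n a _ hd => hN n a hd
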